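/- arXiv:2309.04586 — 3 statements merged into one kernel-verified Lean document; each statement's English description precedes it below -/
import Mathlib

section
/- For every real number δ with 1/3 < δ < 1/2, we have min(δ, (1 - 3δ + 2δ²)/(4δ²)) ≤ 0.358. -/
theorem stmt_0 (δ : ℝ) (h1 : 1/3 < δ) (h2 : δ < 1/2) :
    min δ ((1 - 3*δ + 2*δ^2) / (4*δ^2)) ≤ 0.358 := by
  rcases le_or_gt δ 0.358 with h | h
  · exact le_trans (min_le_left _ _) h
  · refine le_trans (min_le_right _ _) ?_
    rw [div_le_iff₀ (by nlinarith)]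
    nlinarith [sq_nonneg (δ - 0.4)]
end

section
/- Let N be a positive real number. Suppose X₁, X₂, X₃, Y₁, Y₂, Y₃ are nonnegative reals with X₁ + X₂ + X₃ + Y₁ + Y₂ + Y₃ ≤ N. Then there exist indices i ≠ j in {1,2,3} and k ∈ {1,2,3} such that X_k + Y_i ≤ N/3 and X_k + Y_j ≤ N/3, or there exist indices i ≠ j and k such that Y_k + X_i ≤ N/3 and Y_k + X_j ≤ N/3. -/
lemma med_aux (f : Fin 3 → ℝ) : ∃ i j l : Fin 3, i ≠ j ∧
    f i + f j + f l = f 0 + f 1 + f 2 ∧ f i ≤ f l ∧ f j ≤ f l := by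
  obtain ⟨l, hl⟩ := Finite.exists_max f
  fin_cases l
  · exact ⟨1, 2, 0, by decide, by ring, hl 1, hl 2⟩
  · exact ⟨0, 2, 1, by decide, by ring, hl 0, hl 2⟩
  · exact ⟨0, 1, 2, by decide, by ring, hl 0, hl 1⟩

theorem stmt_3 (N : ℝ) (hN : 0 < N) (X Y : Fin 3 → ℝ)
    (hX : ∀ i, 0 ≤ X i) (hY : ∀ i, 0 ≤ Y i)
    (hsum : X 0 + X 1 + X 2 + Y 0 + Y 1 + Y 2 ≤ N) :
    (∃ i j k : Fin 3, i ≠ j ∧ X k + Y i ≤ N/3 ∧ X k + Y j ≤ N/3) ∨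
    (∃ i j k : Fin 3, i ≠ j ∧ Y k + X i ≤ N/3 ∧ Y k + X j ≤ N/3) := by
  obtain ⟨kX, hkX⟩ := Finite.exists_min X
  obtain ⟨kY, hkY⟩ := Finite.exists_min Y
  obtain ⟨iX, jX, lX, hneX, hsX, hiX, hjX⟩ := med_aux X
  obtain ⟨iY, jY, lY, hneY, hsY, hiY, hjY⟩ := med_aux Y
  set mX := max (X iX) (X jX) with hmX
  set mY := max (Y iY) (Y jY) with hmY
  by_cases h1 : X kX + mY ≤ N/3
  · exact Or.inl ⟨iY, jY, kX, hneY,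
      le_trans (by simp [hmY, le_max_left]) h1,
      le_trans (by simp [hmY, le_max_right]) h1⟩
  by_cases h2 : Y kY + mX ≤ N/3
  · exact Or.inr ⟨iX, jX, kY, hneX,
      le_trans (by simp [hmX, le_max_left]) h2,
      le_trans (by simp [hmX, le_max_right]) h2⟩
  exfalso
  push_neg at h1 h2
  have e1 : min (X iX) (X jX) + mX = X iX + X jX := min_add_max _ _
  have e2 : min (Y iY) (Y jY) + mY = Y iY + Y jY := min_add_max _ _
  have m1 : X kX ≤ min (X iX) (X jX) := le_min (hkX iX) (hkX jX)
  have m2 : Y kY ≤ min (Y iY) (Y jY) := le_min (hkY iY) (hkY jY)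
  have m3 : mX ≤ X lX := max_le hiX hjX
  have m4 : mY ≤ Y lY := max_le hiY hjY
  have m5 : Y kY ≤ mY := le_trans (hkY iY) (le_max_left _ _)
  linarith
end

section
/- Let N > 0 and let t ∈ [0, N/2] denote the number of corruptions Bob observes among Alice's N symbols, after which Bob sends m(t) = √2·N - 2√2·t symbols. Then for all t ∈ [0, N/2], the total corruption needed to fool the protocol, t + m(t)/2, as a fraction of the total protocol length N + m(t), is at least 1/(2+√2); formally, (t + (√2·N - 2√2·t)/2)/(N + √2·N - 2√2·t) ≥ 1/(2+√2) for all 0 ≤ t ≤ N/2. -/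
theorem stmt_9 (N t : ℝ) (hN : 0 < N) (ht0 : 0 ≤ t) (ht : t ≤ N/2) :
    (t + (Real.sqrt 2 * N - 2 * Real.sqrt 2 * t)/2) /
      (N + Real.sqrt 2 * N - 2 * Real.sqrt 2 * t) ≥ 1/(2 + Real.sqrt 2) := by
  have hs : Real.sqrt 2 ^ 2 = 2 := Real.sq_sqrt (by norm_num)
  have hs0 : 0 < Real.sqrt 2 := Real.sqrt_pos.mpr (by norm_num)
  have hden : 0 < N + Real.sqrt 2 * N - 2 * Real.sqrt 2 * t := by nlinarith
  rw [ge_iff_le, div_le_div_iff₀ (by positivity) hden]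
  nlinarith
end
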